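/- Let C ⊆ ℝ^N be a convex cone with C ≠ {0}, let p ≥ 2, let A_1,…,A_p ∈ M_N(ℝ), and let 𝒜_p be the companion block matrix. For J ⊆ {1,…,p} let C^{J,p} := {x = (x_1,…,x_p) ∈ (ℝ^N)^p : x_i ∈ C for all i ∈ J}, a wedge in (ℝ^N)^p. If 𝒜_p is cross-positive with respect to C^{J,p}, i.e. ⟨𝒜_p x, u⟩ ≥ 0 for all x, u ∈ C^{J,p} with ⟨x, u⟩ = 0 (with the standard inner product on (ℝ^N)^p ≅ ℝ^{pN}), then J = {1,…,p}. -/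

import Mathlib

open Matrix

noncomputable section

/-- The companion block matrix `𝒜_p ∈ M_{pN}(ℝ)` of the family `A 0 = A_1, …, A (p-1) = A_p`:
identity `N×N` blocks in positions `(i, i+1)` for `i = 1,…,p−1`, last block row
`[A_p, A_{p−1}, …, A_1]`, and zero blocks elsewhere. -/
def companionM {N p : ℕ} (A : Fin p → Matrix (Fin N) (Fin N) ℝ) :
    Matrix (Fin p × Fin N) (Fin p × Fin N) ℝ :=
  Matrix.of fun x y =>
    if (x.1 : ℕ) + 1 = p then A y.1.rev x.2 y.2
    else if (y.1 : ℕ) = (x.1 : ℕ) + 1 then (if x.2 = y.2 then (1 : ℝ) else 0) else 0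

lemma dot_ind {N p : ℕ} (f : Fin p × Fin N → ℝ) (b : Fin p) (w : Fin N → ℝ) :
    f ⬝ᵥ (fun q => if q.1 = b then w q.2 else 0) = ∑ k, f (b, k) * w k := by
  rw [dotProduct, Fintype.sum_prod_type]
  rw [Finset.sum_eq_single b]
  · simp
  · intro j _ hj; simp [hj]
  · simp

lemma aux_dot {N p : ℕ} (A : Fin p → Matrix (Fin N) (Fin N) ℝ) (b b1 : Fin p)
    (hb : (b : ℕ) + 1 ≠ p) (hb1 : (b1 : ℕ) = (b : ℕ) + 1) (v w : Fin N → ℝ) :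
    (companionM A).mulVec (fun q => if q.1 = b1 then v q.2 else 0) ⬝ᵥ
      (fun q => if q.1 = b then w q.2 else 0) = v ⬝ᵥ w := by
  rw [dot_ind]
  have hmv : ∀ k, (companionM A).mulVec (fun q => if q.1 = b1 then v q.2 else 0) (b, k)
      = v k := by
    intro k
    rw [mulVec, dot_ind]
    simp only [companionM, Matrix.of_apply, hb, if_false, hb1, if_true]
    simp
  simp only [hmv]
  rfl

/-- Let `C ⊆ ℝ^N` be a convex cone with `C ≠ {0}`, let `p ≥ 2`, and let `𝒜_p` be the companion
block matrix of `A_1,…,A_p`. For `J ⊆ {1,…,p}` let `C^{J,p}` be the wedge of all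
`x = (x_1,…,x_p) ∈ (ℝ^N)^p` with `x_i ∈ C` for all `i ∈ J`. If `𝒜_p` is cross-positive with
respect to `C^{J,p}` (i.e. `⟨𝒜_p x, u⟩ ≥ 0` whenever `x, u ∈ C^{J,p}` and `⟨x, u⟩ = 0`),
then `J = {1,…,p}`. -/
theorem crossPositive_wedge_forces_full_index {N p : ℕ} (hp : 2 ≤ p)
    (C : Set (Fin N → ℝ))
    (hadd : ∀ x ∈ C, ∀ y ∈ C, x + y ∈ C)
    (hsmul : ∀ t : ℝ, 0 ≤ t → ∀ x ∈ C, t • x ∈ C)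
    (h0 : (0 : Fin N → ℝ) ∈ C)
    (hne : C ≠ {0})
    (A : Fin p → Matrix (Fin N) (Fin N) ℝ)
    (J : Finset (Fin p))
    (hcross : ∀ x u : Fin p × Fin N → ℝ,
      (∀ i ∈ J, (fun k => x (i, k)) ∈ C) →
      (∀ i ∈ J, (fun k => u (i, k)) ∈ C) →
      x ⬝ᵥ u = 0 → 0 ≤ (companionM A).mulVec x ⬝ᵥ u) :
    J = Finset.univ := by
  -- a nonzero element of C
  obtain ⟨c, hcC, hc0⟩ : ∃ c ∈ C, c ≠ 0 := by
    by_contra h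
    push_neg at h
    exact hne (Set.eq_singleton_iff_unique_mem.mpr ⟨h0, fun x hx => h x hx⟩)
  have hcc : 0 < c ⬝ᵥ c := by
    rcases Function.ne_iff.mp hc0 with ⟨k, hk⟩
    have : ∀ l, 0 ≤ c l * c l := fun l => mul_self_nonneg _
    have hpos : 0 < c k * c k := mul_self_pos.mpr hk
    calc (0:ℝ) < c k * c k := hpos
      _ ≤ ∑ l, c l * c l := Finset.single_le_sum (fun l _ => this l) (Finset.mem_univ k)
  by_contra hJ
  obtain ⟨i, hi⟩ : ∃ i : Fin p, i ∉ J := by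
    by_contra h
    push_neg at h
    exact hJ (Finset.eq_univ_iff_forall.mpr h)
  -- choose blocks b, b1 with b1 = b+1, b+1 ≠ p
  by_cases hcase : (i : ℕ) + 1 < p
  · -- u supported on block i (free), x on block i+1
    set b1 : Fin p := ⟨(i : ℕ) + 1, hcase⟩ with hb1def
    have hb1 : (b1 : ℕ) = (i : ℕ) + 1 := rfl
    have hbne : b1 ≠ i := by
      intro h
      have := congrArg (Fin.val) h
      omega
    set x : Fin p × Fin N → ℝ := fun q => if q.1 = b1 then c q.2 else 0 with hxdef
    set u : Fin p × Fin N → ℝ := fun q => if q.1 = i then (-c) q.2 else 0 with hudef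
    have hx : ∀ j ∈ J, (fun k => x (j, k)) ∈ C := by
      intro j _
      by_cases h : j = b1
      · simpa [hxdef, h] using hcC
      · simp [hxdef, h]
        exact h0
    have hu : ∀ j ∈ J, (fun k => u (j, k)) ∈ C := by
      intro j hj
      have : j ≠ i := fun h => hi (h ▸ hj)
      simp only [hudef, this, if_neg]
      exact h0
    have hxu : x ⬝ᵥ u = 0 := by
      rw [dot_ind]
      simp [hxdef, hbne.symm, Ne.symm hbne]
    have := hcross x u hx hu hxu
    rw [aux_dot A i b1 (by omega) hb1 c (-c)] at this
    simp only [dotProduct] at this hcc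
    have h2 : ∑ l, c l * (-c) l = -∑ l, c l * c l := by
      simp [mul_neg]
    rw [h2] at this
    linarith
  · -- i = p - 1 : x supported on block i = p-1 (free), u on block p-2
    have hip : (i : ℕ) = p - 1 := by have := i.isLt; omega
    have hb : p - 2 < p := by omega
    set b : Fin p := ⟨p - 2, hb⟩ with hbdef
    have hb1 : (i : ℕ) = (b : ℕ) + 1 := by simp [hbdef, hip]; omega
    have hbne : i ≠ b := by
      intro h
      have := congrArg (Fin.val) h
      omega
    set x : Fin p × Fin N → ℝ := fun q => if q.1 = i then (-c) q.2 else 0 with hxdef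
    set u : Fin p × Fin N → ℝ := fun q => if q.1 = b then c q.2 else 0 with hudef
    have hx : ∀ j ∈ J, (fun k => x (j, k)) ∈ C := by
      intro j hj
      have : j ≠ i := fun h => hi (h ▸ hj)
      simp only [hxdef, this, if_neg]
      exact h0
    have hu : ∀ j ∈ J, (fun k => u (j, k)) ∈ C := by
      intro j _
      by_cases h : j = b
      · simpa [hudef, h] using hcC
      · simp [hudef, h]
        exact h0
    have hxu : x ⬝ᵥ u = 0 := by
      rw [dot_ind]
      simp [hxdef, hbne, Ne.symm hbne]
    have := hcross x u hx hu hxu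
    rw [aux_dot A b i (by omega) hb1 (-c) c] at this
    simp only [dotProduct] at this hcc
    have h2 : ∑ l, (-c) l * c l = -∑ l, c l * c l := by
      simp [neg_mul]
    rw [h2] at this
    linarith
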